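/- Let x and y be nonzero vectors in ℝ^d. Then ‖x‖ · ‖y‖ · sin(angle(x, y)) ≤ max(‖x‖, ‖y‖) · ‖x − y‖, where angle(x, y) ∈ [0, π] is the angle between x and y. -/

import Mathlib

open InnerProductGeometry

/-- Twice the area of the triangle `0, x, y` is at most `max ‖x‖ ‖y‖` times the length of
the side from `x` to `y`. -/
theorem sin_angle_area_bound (d : ℕ) (x y : EuclideanSpace ℝ (Fin d))
    (hx : x ≠ 0) (hy : y ≠ 0) :
    ‖x‖ * ‖y‖ * Real.sin (InnerProductGeometry.angle x y) ≤ max ‖x‖ ‖y‖ * ‖x - y‖ := by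
  have ha : (0:ℝ) < ‖x‖ := norm_pos_iff.2 hx
  have hb : (0:ℝ) < ‖y‖ := norm_pos_iff.2 hy
  have hsin : 0 ≤ Real.sin (angle x y) := Real.sin_nonneg_of_nonneg_of_le_pi (angle_nonneg x y) (angle_le_pi x y)
  set c : ℝ := (inner ℝ x y : ℝ) with hc
  have hcos : Real.cos (angle x y) = c / (‖x‖ * ‖y‖) := cos_angle x y
  have hsq : Real.sin (angle x y) ^ 2 = 1 - (c / (‖x‖ * ‖y‖)) ^ 2 := by
    rw [Real.sin_sq, hcos]
  have hnorm : ‖x - y‖ ^ 2 = ‖x‖ ^ 2 - 2 * c + ‖y‖ ^ 2 := by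
    simpa [hc] using @norm_sub_sq_real (EuclideanSpace ℝ (Fin d)) _ _ x y
  have key : ‖x‖ * Real.sin (angle x y) ≤ ‖x - y‖ := by
    have h2 : (‖x‖ * Real.sin (angle x y)) ^ 2 ≤ ‖x - y‖ ^ 2 := by
      have : (‖x‖ * Real.sin (angle x y)) ^ 2 = ‖x‖ ^ 2 - c ^ 2 / ‖y‖ ^ 2 := by
        rw [mul_pow, hsq]
        field_simp
      rw [this, hnorm]
      have hy2 : (0:ℝ) < ‖y‖ ^ 2 := by positivity
      have h0 : 2 * c - ‖y‖ ^ 2 ≤ c ^ 2 / ‖y‖ ^ 2 := by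
        rw [le_div_iff₀ hy2]
        nlinarith [sq_nonneg (c - ‖y‖ ^ 2)]
      linarith
    nlinarith [norm_nonneg (x - y), mul_nonneg ha.le hsin]
  calc ‖x‖ * ‖y‖ * Real.sin (angle x y) = ‖y‖ * (‖x‖ * Real.sin (angle x y)) := by ring
    _ ≤ ‖y‖ * ‖x - y‖ := by
        exact mul_le_mul_of_nonneg_left key hb.le
    _ ≤ max ‖x‖ ‖y‖ * ‖x - y‖ :=
        mul_le_mul_of_nonneg_right (le_max_right _ _) (norm_nonneg _)
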